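/- Let A, B, C, D be quaternions with zero real part such that B − A, C − B, D − C, and D − A are all nonzero, let α, β be nonzero real numbers, and suppose the quaternionic cross ratio satisfies (A − B)(B − C)⁻¹(C − D)(D − A)⁻¹ = α/β (a real scalar quaternion). Then α·(B − A)/‖B − A‖² + β·(C − B)/‖C − B‖² = β·(D − A)/‖D − A‖² + α·(C − D)/‖C − D‖². -/

import Mathlib

open Quaternion

lemma dual_edge (x : Quaternion ℝ) (hre : x.re = 0) (γ : ℝ) :
    (γ / ‖x‖ ^ 2) • x = -(γ • x⁻¹) := by
  have hstar : star x = -x := (Quaternion.star_eq_neg).2 hre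
  have hinv : x⁻¹ = (normSq x)⁻¹ • star x := rfl
  rw [hinv, hstar, smul_neg, smul_neg, neg_neg, smul_smul]
  congr 1
  rw [sq, ← Quaternion.normSq_eq_norm_mul_self, div_eq_mul_inv]

/-- Closedness of the Christoffel dual edges of a quadrilateral of purely imaginary quaternions
with real cross ratio `α/β`:
`α(B−A)/‖B−A‖² + β(C−B)/‖C−B‖² = β(D−A)/‖D−A‖² + α(C−D)/‖C−D‖²`. -/
theorem stmt_13 (A B C D : Quaternion ℝ)
    (hA : A.re = 0) (hB : B.re = 0) (hC : C.re = 0) (hD : D.re = 0)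
    (h1 : B - A ≠ 0) (h2 : C - B ≠ 0) (h3 : D - C ≠ 0) (h4 : D - A ≠ 0)
    (α β : ℝ) (hα : α ≠ 0) (hβ : β ≠ 0)
    (hQ : (A - B) * (B - C)⁻¹ * (C - D) * (D - A)⁻¹ = ((α / β : ℝ) : Quaternion ℝ)) :
    (α / ‖B - A‖ ^ 2) • (B - A) + (β / ‖C - B‖ ^ 2) • (C - B) =
      (β / ‖D - A‖ ^ 2) • (D - A) + (α / ‖C - D‖ ^ 2) • (C - D) := by
  set a := B - A with ha_def
  set b := C - B with hb_def
  set e := C - D with he_def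
  set d := D - A with hd_def
  have he : e ≠ 0 := fun h => h3 (by rw [← neg_eq_zero, he_def, neg_sub] at h; exact h)
  have hare : a.re = 0 := by simp [ha_def, Quaternion.re_sub, hA, hB]
  have hbre : b.re = 0 := by simp [hb_def, Quaternion.re_sub, hB, hC]
  have here : e.re = 0 := by simp [he_def, Quaternion.re_sub, hC, hD]
  have hdre : d.re = 0 := by simp [hd_def, Quaternion.re_sub, hA, hD]
  set r : Quaternion ℝ := ((α / β : ℝ) : Quaternion ℝ) with hr_def
  have hQ' : a * b⁻¹ * e * d⁻¹ = r := by
    have h1' : A - B = -a := by rw [ha_def, neg_sub]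
    have h2' : B - C = -b := by rw [hb_def, neg_sub]
    rw [h1', h2', inv_neg, neg_mul_neg] at hQ
    exact hQ
  have hQ2 : d⁻¹ * e * b⁻¹ * a = r := by
    have := congrArg star hQ'
    simp only [star_mul, star_inv₀, (Quaternion.star_eq_neg).2 hare,
      (Quaternion.star_eq_neg).2 hbre, (Quaternion.star_eq_neg).2 here,
      (Quaternion.star_eq_neg).2 hdre, inv_neg, hr_def, Quaternion.star_coe] at this
    rw [hr_def, ← this]
    simp [neg_mul, mul_neg, mul_assoc]
  have F1 : a * b⁻¹ * e = r * d := by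
    have := congrArg (· * d) hQ'
    simpa [mul_assoc, inv_mul_cancel₀ h4] using this
  have F2 : e * b⁻¹ * a = d * r := by
    have := congrArg (d * ·) hQ2
    simp only [← mul_assoc, mul_inv_cancel₀ h4, one_mul] at this
    exact this
  have hr0 : r ≠ 0 := by
    simp only [hr_def, ne_eq, ← Quaternion.coe_zero, Quaternion.coe_inj]
    exact div_ne_zero hα hβ
  have hβr : β • r = ((α : ℝ) : Quaternion ℝ) := by
    rw [hr_def, Quaternion.smul_coe]
    congr 1
    field_simp
  have hd2 : β • d⁻¹ = α • (a⁻¹ * (b * e⁻¹)) := by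
    have hinv := congrArg (·⁻¹) F2
    simp only [mul_inv_rev, inv_inv] at hinv
    have hd' : d⁻¹ = r * (a⁻¹ * (b * e⁻¹)) := by
      rw [hinv, ← mul_assoc, mul_inv_cancel₀ hr0, one_mul]
    rw [hd', ← smul_mul_assoc, hβr, Quaternion.coe_mul_eq_smul]
  have key : α • a⁻¹ + β • b⁻¹ = β • d⁻¹ + α • e⁻¹ := by
    have hsum : d + e = a + b := by
      rw [ha_def, hb_def, he_def, hd_def]; abel
    apply mul_left_cancel₀ h1
    apply mul_right_cancel₀ he
    have lhs : a * (α • a⁻¹ + β • b⁻¹) * e = α • (e + d) := by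
      rw [mul_add, add_mul, mul_smul_comm, mul_smul_comm, smul_mul_assoc, smul_mul_assoc,
        mul_inv_cancel₀ h1, one_mul, mul_assoc a b⁻¹ e, ← mul_assoc, F1,
        ← smul_mul_assoc, hβr, Quaternion.coe_mul_eq_smul, smul_add]
    have rhs : a * (β • d⁻¹ + α • e⁻¹) * e = α • (b + a) := by
      rw [hd2, mul_add, add_mul, mul_smul_comm, mul_smul_comm, smul_mul_assoc, smul_mul_assoc,
        smul_add]
      congr 1
      · congr 1
        rw [← mul_assoc, ← mul_assoc, mul_inv_cancel₀ h1, one_mul, mul_assoc,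
          inv_mul_cancel₀ he, mul_one]
      · congr 1
        rw [mul_assoc, inv_mul_cancel₀ he, mul_one]
    rw [lhs, rhs, add_comm e d, add_comm b a, hsum]
  calc (α / ‖a‖ ^ 2) • a + (β / ‖b‖ ^ 2) • b
      = -(α • a⁻¹ + β • b⁻¹) := by
        rw [dual_edge a hare α, dual_edge b hbre β, neg_add]
    _ = -(β • d⁻¹ + α • e⁻¹) := by rw [key]
    _ = (β / ‖d‖ ^ 2) • d + (α / ‖e‖ ^ 2) • e := by
        rw [dual_edge d hdre β, dual_edge e here α, neg_add]
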